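/- Tightness of the Chernoff bound (existential form): there exist absolute constants c' > 0, d > 0 and p > 0 such that for every positive integer n and every real ε with 0 < ε < d and ε²·n > p, if X_1, …, X_n are i.i.d. Bernoulli random variables with Pr[X_1 = 1] = 1/2, then Pr{(1/n)·∑_{i=1}^n X_i > 1/2 + ε} > e^{−c'·n·ε²}. -/

import Mathlib

open MeasureTheory

/-- The Bernoulli measure on `Bool` with success probability `p` (for `p ∈ [0,1]`). -/
noncomputable def bern (p : ℝ) : Measure Bool :=
  (PMF.bernoulli (min (Real.toNNReal p) 1) (min_le_right _ _)).toMeasure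

open ENNReal

-- central binomial squared lower bound
theorem cb_sq (m : ℕ) (hm : 1 ≤ m) : 16 ^ m ≤ 4 * m * (Nat.centralBinom m) ^ 2 := by
  induction m with
  | zero => omega
  | succ m ih =>
    rcases Nat.eq_zero_or_pos m with h0 | h0
    · subst h0; simp [Nat.centralBinom]
    · have IH := ih h0
      have key : (m + 1) * Nat.centralBinom (m + 1) = 2 * (2 * m + 1) * Nat.centralBinom m :=
        Nat.succ_mul_centralBinom_succ m
      have h1 : 16 ^ (m + 1) * (m + 1) ≤ 4 * (m + 1) * Nat.centralBinom (m + 1) ^ 2 * (m + 1) := by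
        have h2 : 4 * (m + 1) * Nat.centralBinom (m + 1) ^ 2 * (m + 1) =
            4 * ((m + 1) * Nat.centralBinom (m + 1)) ^ 2 := by ring
        rw [h2, key]
        have : 16 ^ (m + 1) * (m + 1) ≤ 16 * (4 * m * Nat.centralBinom m ^ 2) * (m + 1) := by
          calc 16 ^ (m+1) * (m+1) = 16 * 16 ^ m * (m+1) := by ring
          _ ≤ 16 * (4 * m * Nat.centralBinom m ^ 2) * (m+1) := by
              apply Nat.mul_le_mul_right; exact Nat.mul_le_mul_left _ IH
        refine this.trans ?_
        have h3 : 4 * (2 * (2 * m + 1) * Nat.centralBinom m) ^ 2 =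
            (4 * (2*m+1)^2) * Nat.centralBinom m ^ 2 * 4 := by ring
        have h4 : 16 * (4 * m * Nat.centralBinom m ^ 2) * (m + 1) =
            (16 * m * (m+1)) * Nat.centralBinom m ^ 2 * 4 := by ring
        rw [h3, h4]
        have : 16 * m * (m + 1) ≤ 4 * (2*m+1)^2 := by nlinarith
        exact Nat.mul_le_mul_right _ (Nat.mul_le_mul_right _ this)
      exact Nat.le_of_mul_le_mul_right h1 (Nat.succ_pos m)

theorem cb_sqrt (m : ℕ) (hm : 1 ≤ m) :
    (4 : ℝ) ^ m ≤ 2 * Real.sqrt m * Nat.centralBinom m := by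
  have h := cb_sq m hm
  have hr : (16 : ℝ) ^ m ≤ 4 * m * (Nat.centralBinom m) ^ 2 := by exact_mod_cast h
  have h4 : (4:ℝ)^m = Real.sqrt ((16:ℝ)^m) := by
    rw [show (16:ℝ)^m = ((4:ℝ)^m)^2 by rw [← pow_mul, mul_comm m 2, pow_mul]; norm_num]
    rw [Real.sqrt_sq (by positivity)]
  rw [h4]
  calc Real.sqrt ((16:ℝ)^m) ≤ Real.sqrt (4 * m * (Nat.centralBinom m)^2) := Real.sqrt_le_sqrt hr
  _ = 2 * Real.sqrt m * Nat.centralBinom m := by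
      rw [show (4:ℝ) * m * (Nat.centralBinom m)^2 = (2 * Real.sqrt m * Nat.centralBinom m)^2 by
        rw [mul_pow, mul_pow, Real.sq_sqrt (by positivity)]; ring]
      rw [Real.sqrt_sq (by positivity)]


theorem middle_binom (n : ℕ) (hn : 1 ≤ n) :
    (2 : ℝ) ^ n ≤ 3 * Real.sqrt n * (n.choose (n / 2)) := by
  rcases Nat.even_or_odd n with ⟨m, hm⟩ | ⟨m, hm⟩
  · -- n = 2m
    subst hm
    have hm1 : 1 ≤ m := by omega
    have hdiv : (m + m) / 2 = m := by omega
    rw [hdiv]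
    have h := cb_sqrt m hm1
    have hc : (m + m).choose m = Nat.centralBinom m := by
      rw [Nat.centralBinom]; congr 1; omega
    rw [hc]
    calc (2:ℝ)^(m+m) = 4^m := by rw [show m + m = 2*m by ring, pow_mul]; norm_num
    _ ≤ 2 * Real.sqrt m * Nat.centralBinom m := h
    _ ≤ 3 * Real.sqrt (m+m : ℕ) * Nat.centralBinom m := by
        have : (2:ℝ) * Real.sqrt m ≤ 3 * Real.sqrt (m+m : ℕ) := by
          have h1 : Real.sqrt m ≤ Real.sqrt (m+m:ℕ) := by
            apply Real.sqrt_le_sqrt; push_cast; linarith [Nat.cast_nonneg (α := ℝ) m]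
          nlinarith [Real.sqrt_nonneg (m:ℝ)]
        exact mul_le_mul_of_nonneg_right this (Nat.cast_nonneg _)
  · -- n = 2m+1
    subst hm
    rcases Nat.eq_zero_or_pos m with h0 | h0
    · subst h0; norm_num
    have hdiv : (2*m + 1) / 2 = m := by omega
    rw [hdiv]
    have h := cb_sqrt m h0
    have hcle : (Nat.centralBinom m : ℝ) ≤ (2*m+1).choose m := by
      exact_mod_cast Nat.choose_le_choose m (by omega : 2*m ≤ 2*m+1)
    have hsq : (4:ℝ) * Real.sqrt m ≤ 3 * Real.sqrt (2*m+1 : ℕ) := by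
      have h1 : (16:ℝ) * m ≤ 9 * (2*m+1:ℕ) := by push_cast; nlinarith [show (1:ℝ) ≤ m from by exact_mod_cast h0]
      have h2 : (4:ℝ) * Real.sqrt m = Real.sqrt (16 * m) := by
        rw [show (16:ℝ)*m = 4^2 * m by norm_num, Real.sqrt_mul (by positivity), Real.sqrt_sq]; norm_num
      have h3 : (3:ℝ) * Real.sqrt (2*m+1:ℕ) = Real.sqrt (9 * (2*m+1:ℕ)) := by
        rw [show (9:ℝ)*(2*m+1:ℕ) = 3^2 * (2*m+1:ℕ) by norm_num, Real.sqrt_mul (by positivity), Real.sqrt_sq]; norm_num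
      rw [h2, h3]; exact Real.sqrt_le_sqrt h1
    have hcb : (0:ℝ) ≤ Nat.centralBinom m := Nat.cast_nonneg _
    calc (2:ℝ)^(2*m+1) = 2 * 4^m := by rw [pow_succ, pow_mul]; ring_nf
    _ ≤ 2 * (2 * Real.sqrt m * Nat.centralBinom m) := by linarith
    _ = (4 * Real.sqrt m) * Nat.centralBinom m := by ring
    _ ≤ (3 * Real.sqrt (2*m+1:ℕ)) * Nat.centralBinom m :=
        mul_le_mul_of_nonneg_right hsq hcb
    _ ≤ 3 * Real.sqrt (2*m+1:ℕ) * ((2*m+1).choose m) := by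
        apply mul_le_mul_of_nonneg_left hcle; positivity

-- binomial ratio descent
theorem choose_descent (n K k₀ : ℕ) (hK : K ≤ n) (hKpos : 0 < K) :
    ∀ s : ℕ, k₀ + s ≤ K →
      (n.choose k₀ : ℝ) * (((n : ℝ) - K) / K) ^ s ≤ n.choose (k₀ + s) := by
  intro s
  induction s with
  | zero => intro _; simp
  | succ s ih =>
    intro hs
    have hs' : k₀ + s ≤ K := by omega
    have IH := ih hs'
    set j := k₀ + s with hj
    have hjn : j < n := by omega
    have key : ((n.choose (j+1) : ℝ)) * (j+1) = (n.choose j) * ((n:ℝ) - j) := by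
      have := Nat.choose_succ_right_eq n j
      have h2 : ((n.choose (j+1) * (j+1) : ℕ) : ℝ) = ((n.choose j * (n - j) : ℕ) : ℝ) := by
        norm_cast
      push_cast [Nat.cast_sub hjn.le] at h2
      linarith [h2]
    have hKR : (0:ℝ) < K := by exact_mod_cast hKpos
    have hnK : (0:ℝ) ≤ (n:ℝ) - K := by
      have : (K:ℝ) ≤ n := by exact_mod_cast hK
      linarith
    have hr : (0:ℝ) ≤ ((n:ℝ) - K) / K := div_nonneg hnK hKR.le
    have hj1 : (0:ℝ) < (j:ℝ) + 1 := by positivity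
    -- ratio inequality: (n - K)/K ≤ (n - j)/(j+1)
    have hratio : ((n:ℝ) - K) / K ≤ ((n:ℝ) - j) / ((j:ℝ)+1) := by
      rw [div_le_div_iff₀ hKR hj1]
      have h1 : (j:ℝ) + 1 ≤ K := by exact_mod_cast hs
      have h2 : (K:ℝ) ≤ n := by exact_mod_cast hK
      nlinarith
    have hch : (0:ℝ) ≤ n.choose j := Nat.cast_nonneg _
    have hgoal : (n.choose j : ℝ) * (((n:ℝ) - K)/K) ≤ n.choose (j+1) := by
      have : (n.choose j : ℝ) * (((n:ℝ) - K)/K) ≤ (n.choose j) * (((n:ℝ) - j)/((j:ℝ)+1)) :=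
        mul_le_mul_of_nonneg_left hratio hch
      refine this.trans ?_
      rw [← mul_div_assoc, div_le_iff₀ hj1]
      nlinarith [key]
    calc (n.choose k₀ : ℝ) * (((n:ℝ) - K)/K) ^ (s+1)
        = ((n.choose k₀ : ℝ) * (((n:ℝ) - K)/K) ^ s) * (((n:ℝ) - K)/K) := by ring
    _ ≤ (n.choose j : ℝ) * (((n:ℝ) - K)/K) := mul_le_mul_of_nonneg_right IH hr
    _ ≤ n.choose (j+1) := hgoal

theorem exp_lb (x : ℝ) (h0 : 0 ≤ x) (h1 : x ≤ 1/2) : Real.exp (-2*x) ≤ 1 - x := by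
  have h2 : 1 + 2*x ≤ Real.exp (2*x) := by linarith [Real.add_one_le_exp (2*x)]
  have hpos : (0:ℝ) < 1 + 2*x := by linarith
  have : Real.exp (-2*x) = (Real.exp (2*x))⁻¹ := by rw [← Real.exp_neg]; ring_nf
  rw [this]
  have h3 : (Real.exp (2*x))⁻¹ ≤ (1 + 2*x)⁻¹ := by
    apply inv_anti₀ hpos h2
  refine h3.trans ?_
  rw [inv_le_iff_one_le_mul₀ hpos] at *
  nlinarith


theorem bern_half_singleton (b : Bool) : bern (1/2) {b} = 2⁻¹ := by
  have hp : min (Real.toNNReal (1/2)) 1 = 2⁻¹ := by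
    have h1 : Real.toNNReal (1/2 : ℝ) = 2⁻¹ := by
      ext; simp
    rw [h1, min_eq_left (inv_le_one_of_one_le₀ one_le_two)]
  unfold bern
  rw [PMF.toMeasure_apply_singleton _ _ (measurableSet_singleton b)]
  rw [PMF.bernoulli_apply, hp]
  cases b
  · simp [ENNReal.coe_sub, ENNReal.one_sub_inv_two]
  · simp

theorem pi_singleton (n : ℕ) (ω : Fin n → Bool) :
    (Measure.pi fun _ : Fin n => bern (1/2)) {ω} = 2⁻¹ ^ n := by
  haveI : SigmaFinite (bern (1/2)) := by
    unfold bern; infer_instance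
  rw [← Set.univ_pi_singleton ω, Measure.pi_pi]
  rw [Finset.prod_congr rfl (fun i _ => bern_half_singleton (ω i)), Finset.prod_const]
  simp

theorem measure_ge_card (n : ℕ) (F : Finset (Fin n → Bool)) (S : Set (Fin n → Bool))
    (hF : ∀ ω ∈ F, ω ∈ S) :
    (F.card : ℝ≥0∞) * 2⁻¹ ^ n ≤ (Measure.pi fun _ : Fin n => bern (1/2)) S := by
  have h1 : (⋃ ω ∈ F, ({ω} : Set (Fin n → Bool))) ⊆ S := by
    simp only [Set.iUnion_subset_iff, Set.singleton_subset_iff]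
    exact hF
  refine le_trans ?_ (measure_mono h1)
  rw [measure_biUnion_finset ?_ (fun ω _ => measurableSet_singleton ω)]
  · rw [Finset.sum_congr rfl (fun ω _ => pi_singleton n ω), Finset.sum_const, nsmul_eq_mul]
  · intro a _ b _ hab
    simp [Set.disjoint_singleton, hab]

def indic (n : ℕ) (s : Finset (Fin n)) : Fin n → Bool := fun i => decide (i ∈ s)

theorem indic_inj (n : ℕ) : Function.Injective (indic n) := by
  intro s t h
  ext i
  have := congrFun h i
  simpa [indic] using this

theorem indic_count (n : ℕ) (s : Finset (Fin n)) :
    (Finset.univ.filter fun i => indic n s i = true).card = s.card := by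
  congr 1
  ext i
  simp [indic]

theorem indic_sum (n : ℕ) (s : Finset (Fin n)) :
    (∑ i, if indic n s i then (1:ℝ) else 0) = s.card := by
  rw [Finset.sum_boole]
  rw [show (Finset.univ.filter fun i => indic n s i = true) = s by ext i; simp [indic]]

noncomputable def Fset (n k K : ℕ) : Finset (Fin n → Bool) :=
  (Finset.Icc k K).biUnion fun l => (Finset.univ.powersetCard l).image (indic n)

theorem Fset_card (n k K : ℕ) :
    (Fset n k K).card = ∑ l ∈ Finset.Icc k K, n.choose l := by
  unfold Fset
  rw [Finset.card_biUnion]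
  · refine Finset.sum_congr rfl fun l _ => ?_
    rw [Finset.card_image_of_injective _ (indic_inj n), Finset.card_powersetCard,
      Finset.card_univ, Fintype.card_fin]
  · intro a _ b _ hab
    simp only [Finset.disjoint_left]
    intro ω hω hω'
    simp only [Finset.mem_image] at hω hω'
    obtain ⟨s, hs, rfl⟩ := hω
    obtain ⟨t, ht, hts⟩ := hω'
    have hs' := (Finset.mem_powersetCard.mp hs).2
    have ht' := (Finset.mem_powersetCard.mp ht).2
    exact hab (by rw [← hs', ← ht', indic_inj n hts])

theorem Fset_mem (n k K : ℕ) (ω : Fin n → Bool) (hω : ω ∈ Fset n k K) :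
    ∃ l : ℕ, k ≤ l ∧ l ≤ K ∧ (∑ i, if ω i then (1:ℝ) else 0) = l := by
  unfold Fset at hω
  simp only [Finset.mem_biUnion, Finset.mem_Icc, Finset.mem_image] at hω
  obtain ⟨l, ⟨h1, h2⟩, s, hs, rfl⟩ := hω
  exact ⟨l, h1, h2, by rw [indic_sum, (Finset.mem_powersetCard.mp hs).2]⟩

set_option maxHeartbeats 1000000 in
theorem main_real (n : ℕ) (ε : ℝ) (hε : 0 < ε) (hεd : ε < 1/100) (hp : 1 < ε^2 * n) :
    ∃ k K : ℕ, (n:ℝ)/2 + n*ε < k ∧ k ≤ K ∧ K ≤ n ∧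
      Real.exp (-(300 * n * ε^2)) < (∑ l ∈ Finset.Icc k K, (n.choose l : ℝ)) * (2⁻¹:ℝ)^n := by
  have hε2 : (0:ℝ) < ε^2 := by positivity
  have hn0 : (0:ℝ) < n := by nlinarith only [hp, hε2]
  have hn4 : (10000:ℝ) ≤ n := by nlinarith only [hp, hε, hεd, hn0]
  have hn1 : 1 ≤ n := by exact_mod_cast (by linarith only [hn4] : (1:ℝ) ≤ n)
  have hb_sq : Real.sqrt n ^ 2 = n := Real.sq_sqrt hn0.le
  have hb_nonneg : (0:ℝ) ≤ Real.sqrt n := Real.sqrt_nonneg _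
  have hb100 : (100:ℝ) ≤ Real.sqrt n := by
    nlinarith only [hb_sq, hb_nonneg, hn4]
  have hbn : Real.sqrt n ≤ n/100 := by nlinarith only [hb_sq, hb100]
  obtain ⟨k, hk_lt, hk_le⟩ : ∃ k : ℕ, (n:ℝ)/2 + n*ε < k ∧ (k:ℝ) ≤ n/2 + n*ε + 1 := by
    refine ⟨⌊(n:ℝ)/2 + n*ε⌋₊ + 1, ?_, ?_⟩
    · have := Nat.lt_floor_add_one ((n:ℝ)/2 + n*ε)
      push_cast; linarith only [this]
    · have := Nat.floor_le (by positivity : (0:ℝ) ≤ (n:ℝ)/2 + n*ε)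
      push_cast; linarith only [this]
  obtain ⟨t, ht_ge, ht_le⟩ : ∃ t : ℕ, Real.sqrt n ≤ t ∧ (t:ℝ) ≤ Real.sqrt n + 1 :=
    ⟨⌈Real.sqrt n⌉₊, Nat.le_ceil _, (Nat.ceil_lt_add_one hb_nonneg).le⟩
  obtain ⟨K, hK_def⟩ : ∃ K : ℕ, K = k + t := ⟨_, rfl⟩
  have hKkt : (K:ℝ) = (k:ℝ) + t := by rw [hK_def]; push_cast; ring
  -- abbreviations
  set a : ℝ := n * ε with ha_def
  have ha_pos : 0 < a := by positivity
  have ha2 : a^2 = n * (ε^2 * n) := by ring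
  have ha100 : 100 < a := by nlinarith only [ha2, hp, hn4, ha_pos, hn0]
  have haε : a ≤ n/100 := by
    rw [ha_def]; nlinarith only [hεd, hn0, hε]
  have hba : Real.sqrt n ≤ a := by
    nlinarith only [hb_sq, hb_nonneg, ha_pos, ha2, hp, hn0]
  set A : ℝ := a + Real.sqrt n + 3 with hA_def
  have hA3a : A ≤ 3 * a := by
    rw [hA_def]; linarith only [hba, ha100]
  have hA_le : A ≤ 3*n/100 := by
    rw [hA_def]
    have h3 : (3:ℝ) ≤ n/100 := by linarith only [hn4]
    linarith only [haε, hbn, h3]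
  have hApos : 0 < A := by positivity
  have hK_real : (K:ℝ) ≤ n/2 + A := by
    rw [hKkt, hA_def]; linarith only [hk_le, ht_le]
  have hKn : K ≤ n := by
    have : (K:ℝ) ≤ n := by linarith only [hK_real, hA_le, hn4]
    exact_mod_cast this
  have hKhalf : (n:ℝ)/2 < K := by
    have h1 : (k:ℝ) ≤ K := by rw [hKkt]; linarith only [Nat.cast_nonneg (α := ℝ) t]
    linarith only [h1, hk_lt, ha_pos]
  have hKpos : 0 < K := by
    have hkR : (0:ℝ) < K := lt_of_le_of_lt (by positivity) hKhalf
    exact_mod_cast Nat.cast_pos.mp hkR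
  have hKRpos : (0:ℝ) < K := by exact_mod_cast hKpos
  obtain ⟨k₀, hk0_def⟩ : ∃ k₀ : ℕ, k₀ = n / 2 := ⟨_, rfl⟩
  have hk0_le : (k₀:ℝ) ≤ (n:ℝ)/2 := by
    have h2 : ((k₀ : ℕ) : ℝ) * 2 ≤ n := by
      rw [hk0_def]; exact_mod_cast Nat.div_mul_le_self n 2
    linarith only [h2]
  have hk0_ge : ((n:ℝ) - 1)/2 ≤ k₀ := by
    have : n ≤ 2 * k₀ + 1 := by omega
    have h2 : (n:ℝ) ≤ 2 * k₀ + 1 := by exact_mod_cast this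
    linarith only [h2]
  have hk0k : k₀ ≤ k := by
    have : (k₀:ℝ) < k := by linarith only [hk0_le, hk_lt, ha_pos]
    exact_mod_cast this.le
  have hk0K : k₀ ≤ K := by omega
  set r : ℝ := ((n:ℝ) - K)/K with hr_def
  set u : ℝ := 2*A/n with hu_def
  have hu_pos : 0 < u := by positivity
  have hu_le : u ≤ 1/4 := by
    rw [hu_def, div_le_iff₀ hn0]
    linarith only [hA_le, hn0]
  clear_value a A u r
  have humul : (n:ℝ)/2 * u = A := by
    rw [hu_def]; field_simp
  have hnK_lb : (n:ℝ)/2 * (1 - u) ≤ (n:ℝ) - K := by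
    nlinarith only [humul, hK_real]
  have hK_ub : (K:ℝ) ≤ (n:ℝ)/2 * (1 + u) := by
    nlinarith only [humul, hK_real]
  have hu1 : (0:ℝ) < 1 + u := by linarith only [hu_pos]
  have hr_lb : (1-u)/(1+u) ≤ r := by
    rw [hr_def, div_le_div_iff₀ hu1 hKRpos]
    nlinarith only [hnK_lb, hK_ub, hu_pos, hu_le, hKRpos, hn0]
  have hr_pos : 0 < r := by
    rw [hr_def]
    exact div_pos (by nlinarith only [hnK_lb, hu_le, hn0]) hKRpos
  have hr_le1 : r ≤ 1 := by
    rw [hr_def, div_le_one hKRpos]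
    linarith only [hKhalf]
  have hexp_r : Real.exp (-(4*u)) ≤ r := by
    have h1 : Real.exp (-2*(2*u)) ≤ 1 - 2*u :=
      exp_lb (2*u) (by linarith only [hu_pos]) (by linarith only [hu_le])
    have h2 : 1 - 2*u ≤ (1-u)/(1+u) := by
      rw [le_div_iff₀ hu1]
      nlinarith only [hu_pos]
    have h3 : Real.exp (-(4*u)) = Real.exp (-2*(2*u)) := by ring_nf
    rw [h3]
    linarith only [h1, h2, hr_lb]
  obtain ⟨Sn, hSn_def⟩ : ∃ s : ℕ, s = K - k₀ := ⟨_, rfl⟩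
  have hSnR : (Sn:ℝ) = (K:ℝ) - k₀ := by
    rw [hSn_def]
    exact Nat.cast_sub hk0K
  have hSn_nonneg : (0:ℝ) ≤ Sn := Nat.cast_nonneg _
  have hSnA : (Sn:ℝ) ≤ A := by
    have h1 : (K:ℝ) ≤ n/2 + a + Real.sqrt n + 2 := by
      rw [hKkt]; linarith only [hk_le, ht_le]
    rw [hSnR, hA_def]
    linarith only [h1, hk0_ge]
  have hrS : Real.exp (-(264 * n * ε^2)) ≤ r ^ Sn := by
    have h1 : Real.exp (-(4*u)) ^ Sn ≤ r ^ Sn :=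
      pow_le_pow_left₀ (Real.exp_nonneg _) hexp_r Sn
    have h2 : Real.exp (-(4*u)) ^ Sn = Real.exp (-(4*u) * Sn) := by
      rw [← Real.exp_nat_mul, mul_comm]
    have h3 : Real.exp (-(264 * n * ε^2)) ≤ Real.exp (-(4*u) * Sn) := by
      apply Real.exp_le_exp.mpr
      have h4 : 4*u*(Sn:ℝ) ≤ 4*u*A :=
        mul_le_mul_of_nonneg_left hSnA (by positivity)
      have h5 : 4*u*A = 8*A^2/n := by
        rw [hu_def]; field_simp; ring
      have h6 : 8*A^2/n ≤ 264 * n * ε^2 := by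
        rw [div_le_iff₀ hn0]
        have hA9 : A^2 ≤ 9 * a^2 := by nlinarith only [hA3a, hApos]
        have ha2' : a^2 = n^2 * ε^2 := by rw [ha_def]; ring
        nlinarith only [hA9, ha2', hn0, hε2]
      have h7 : 4*u*(Sn:ℝ) ≤ 264*n*ε^2 := by linarith only [h4, h5, h6]
      calc -(264 * (n:ℝ) * ε^2) ≤ -(4*u*(Sn:ℝ)) := by linarith only [h7]
      _ = -(4*u) * Sn := by ring
    rw [← h2] at h3
    linarith only [h1, h3]
  -- each binomial term is at least (choose n k₀) * r^Sn
  have hterm : ∀ l ∈ Finset.Icc k K, (n.choose k₀ : ℝ) * r ^ Sn ≤ (n.choose l : ℝ) := by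
    intro l hl
    rw [Finset.mem_Icc] at hl
    obtain ⟨h1, h2⟩ := hl
    have hl0 : k₀ ≤ l := le_trans hk0k h1
    have hs : k₀ + (l - k₀) = l := by omega
    have hd := choose_descent n K k₀ hKn hKpos (l - k₀) (by omega)
    rw [hs, ← hr_def] at hd
    refine le_trans ?_ hd
    apply mul_le_mul_of_nonneg_left _ (Nat.cast_nonneg _)
    exact pow_le_pow_of_le_one hr_pos.le hr_le1 (show l - k₀ ≤ Sn by omega)
  have hkK : k ≤ K := by omega
  have hcard : (Finset.Icc k K).card = t + 1 := by
    rw [Nat.card_Icc]; omega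
  have hsum : ((t:ℝ) + 1) * ((n.choose k₀ : ℝ) * r ^ Sn) ≤ ∑ l ∈ Finset.Icc k K, (n.choose l : ℝ) := by
    have h := Finset.card_nsmul_le_sum (Finset.Icc k K) (fun l => (n.choose l : ℝ))
      ((n.choose k₀ : ℝ) * r ^ Sn) hterm
    rw [hcard, nsmul_eq_mul] at h
    push_cast at h
    linarith only [h]
  have hmb := middle_binom n hn1
  rw [← hk0_def] at hmb
  have hchoose_pos : (0:ℝ) < n.choose k₀ := by
    have : 0 < n.choose k₀ := Nat.choose_pos (by omega)
    exact_mod_cast this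
  have hrSn_pos : (0:ℝ) < r ^ Sn := pow_pos hr_pos Sn
  have hhalf_pow_pos : (0:ℝ) < (2⁻¹:ℝ)^n := by positivity
  have hfinal : Real.exp (-(300 * n * ε^2)) < ((t:ℝ)+1) * ((n.choose k₀ : ℝ) * r ^ Sn) * (2⁻¹:ℝ)^n := by
    have hq : (2:ℝ)^n * (2⁻¹:ℝ)^n = 1 := by
      rw [← mul_pow]; norm_num
    have hlow : (1/3 : ℝ) * (r ^ Sn) ≤ ((t:ℝ)+1) * ((n.choose k₀ : ℝ) * r ^ Sn) * (2⁻¹:ℝ)^n := by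
      have ht1 : Real.sqrt n ≤ (t:ℝ) + 1 := by linarith only [ht_ge]
      have step1 : (2:ℝ)^n/3 * (r ^ Sn) ≤ ((t:ℝ)+1) * (n.choose k₀) * (r ^ Sn) := by
        have hstep : (2:ℝ)^n/3 ≤ ((t:ℝ)+1) * (n.choose k₀) := by
          have h1 : Real.sqrt n * (n.choose k₀) ≤ ((t:ℝ)+1) * (n.choose k₀) :=
            mul_le_mul_of_nonneg_right ht1 hchoose_pos.le
          nlinarith only [hmb, h1]
        exact mul_le_mul_of_nonneg_right hstep hrSn_pos.le
      calc (1/3 : ℝ) * (r ^ Sn) = ((2:ℝ)^n * (2⁻¹:ℝ)^n) * ((1/3) * (r ^ Sn)) := by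
            rw [hq]; ring
      _ = ((2:ℝ)^n/3 * (r ^ Sn)) * (2⁻¹:ℝ)^n := by ring
      _ ≤ (((t:ℝ)+1) * (n.choose k₀) * (r ^ Sn)) * (2⁻¹:ℝ)^n :=
            mul_le_mul_of_nonneg_right step1 hhalf_pow_pos.le
      _ = ((t:ℝ)+1) * ((n.choose k₀ : ℝ) * r ^ Sn) * (2⁻¹:ℝ)^n := by ring
    have hsmall : Real.exp (-(300 * n * ε^2)) < (1/3:ℝ) * Real.exp (-(264 * n * ε^2)) := by
      have h36 : Real.exp (-(36 * n * ε^2)) < 1/3 := by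
        have hx : -(36 * n * ε^2) ≤ -2 := by nlinarith only [hp, hn0, hε2]
        have h1 : Real.exp (-(36 * n * ε^2)) ≤ Real.exp (-2) := Real.exp_le_exp.mpr hx
        have h2 : Real.exp (-2) < 1/3 := by
          rw [Real.exp_neg]
          rw [inv_lt_comm₀ (Real.exp_pos 2) (by norm_num)]
          have := Real.add_one_lt_exp (by norm_num : (2:ℝ) ≠ 0)
          linarith only [this]
        linarith only [h1, h2]
      have hsplit : Real.exp (-(300 * n * ε^2)) =
          Real.exp (-(36 * n * ε^2)) * Real.exp (-(264 * n * ε^2)) := by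
        rw [← Real.exp_add]; ring_nf
      rw [hsplit]
      have hpos := Real.exp_pos (-(264 * n * ε^2))
      nlinarith only [h36, hpos]
    calc Real.exp (-(300 * n * ε^2)) < (1/3:ℝ) * Real.exp (-(264 * n * ε^2)) := hsmall
    _ ≤ (1/3:ℝ) * (r ^ Sn) := by linarith only [hrS]
    _ ≤ _ := hlow
  refine ⟨k, K, hk_lt, hkK, hKn, ?_⟩
  calc Real.exp (-(300 * n * ε^2)) < ((t:ℝ)+1) * ((n.choose k₀ : ℝ) * r ^ Sn) * (2⁻¹:ℝ)^n := hfinal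
  _ ≤ (∑ l ∈ Finset.Icc k K, (n.choose l : ℝ)) * (2⁻¹:ℝ)^n :=
      mul_le_mul_of_nonneg_right hsum hhalf_pow_pos.le

/-- **Tightness of the Chernoff bound.** There are absolute constants `c', d, p > 0`
such that for every `n ≥ 1` and `0 < ε < d` with `ε² n > p`, if `X_1, …, X_n` are
i.i.d. Bernoulli(1/2) random variables then
`Pr{(1/n) ∑ X_i > 1/2 + ε} > e^{-c' n ε²}`. -/
theorem chernoff_tightness :
    ∃ c' > (0 : ℝ), ∃ d > (0 : ℝ), ∃ p > (0 : ℝ),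
      ∀ n : ℕ, 0 < n → ∀ ε : ℝ, 0 < ε → ε < d → p < ε ^ 2 * n →
        ENNReal.ofReal (Real.exp (-(c' * n * ε ^ 2))) <
          (Measure.pi fun _ : Fin n => bern (1 / 2))
            {ω | 1 / 2 + ε < (∑ i, if ω i then (1 : ℝ) else 0) / n} := by
  refine ⟨300, by norm_num, 1/100, by norm_num, 1, by norm_num, ?_⟩
  intro n hn ε hε hεd hp
  obtain ⟨k, K, hk_lt, hkK, hKn, hmain⟩ := main_real n ε hε hεd hp
  have hmem : ∀ ω ∈ Fset n k K,
      ω ∈ {ω : Fin n → Bool | 1 / 2 + ε < (∑ i, if ω i then (1 : ℝ) else 0) / n} := by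
    intro ω hω
    obtain ⟨l, hl1, hl2, hl3⟩ := Fset_mem n k K ω hω
    simp only [Set.mem_setOf_eq]
    rw [hl3, lt_div_iff₀ (by exact_mod_cast hn : (0:ℝ) < n)]
    have h1 : (k:ℝ) ≤ l := by exact_mod_cast hl1
    calc (1/2+ε)*n = n/2 + n*ε := by ring
    _ < k := hk_lt
    _ ≤ l := h1
  have hcount := measure_ge_card n (Fset n k K) _ hmem
  refine lt_of_lt_of_le ?_ hcount
  have h2inv : ENNReal.ofReal ((2⁻¹:ℝ)) = (2⁻¹ : ℝ≥0∞) := by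
    rw [ENNReal.ofReal_inv_of_pos (by norm_num), ENNReal.ofReal_ofNat]
  have hofreal : (((Fset n k K).card : ℕ) : ℝ≥0∞) * 2⁻¹ ^ n =
      ENNReal.ofReal (((Fset n k K).card : ℝ) * (2⁻¹:ℝ)^n) := by
    rw [ENNReal.ofReal_mul (Nat.cast_nonneg _), ENNReal.ofReal_natCast,
      ENNReal.ofReal_pow (by norm_num), h2inv]
  rw [hofreal]
  rw [ENNReal.ofReal_lt_ofReal_iff_of_nonneg (Real.exp_nonneg _)]
  have hcardF : ((Fset n k K).card : ℝ) = ∑ l ∈ Finset.Icc k K, (n.choose l : ℝ) := by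
    rw [Fset_card]; push_cast; ring
  rw [hcardF]
  exact hmain
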